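/- arXiv:2311.06848 — 5 statements merged into one kernel-verified Lean document; each statement's English description precedes it below -/
import Mathlib

section
/- Let L_f > 0, λ ∈ (0, 1/L_f), μ > 0, κ_p, κ_q > 0, p ∈ [0,1), q > 1. Let f : ℝ^n → ℝ be twice continuously differentiable with ⟨∇²f(z)h, h⟩ ≤ L_f‖h‖₂² for all z, h ∈ ℝ^n. Let F : ℝ^n → ℝ be continuously differentiable and attain its minimum value F*, and let H : ℝ^n → ℝ^n be a map such that, for all z ∈ ℝ^n: ∇F(z) = H(z) − λ·∇²f(z)(H(z)) and (1/2)‖H(z)‖₂² ≥ μ(F(z) − F*). If x : [0,∞) → ℝ^n is differentiable and x′(t) = −κ_p·H(x(t))/‖H(x(t))‖₂^{1−p} − κ_q·‖H(x(t))‖₂^{q−1}·H(x(t)) for all t ≥ 0 (the right-hand side interpreted as 0 when H(x(t)) = 0), then F(x(t)) = F* for all t ≥ T, where T = (1/(μ(1−λL_f)))·(1/(κ_p(1−p)) + 1/(κ_q(q−1))). (Theorem 5, where F is the forward–backward envelope F_λ of the composite problem min f + h, H = H_λ(z) = (z − prox_{λh}(z − λ∇f(z)))/λ is the prox-gradient mapping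 satisfying ∇F_λ = (I − λ∇²f)H_λ, and the second displayed hypothesis is the proximal PL inequality.) -/
open scoped RealInnerProductSpace
open Set


lemma fxt_scalar (cp cq α β : ℝ) (hcp : 0 < cp) (hcq : 0 < cq)
    (hα0 : 0 ≤ α) (hα1 : α < 1) (hβ : 1 < β)
    (W W' : ℝ → ℝ)
    (hW : ∀ t ≥ (0:ℝ), HasDerivAt W (W' t) t)
    (hW0 : ∀ t ≥ (0:ℝ), 0 ≤ W t)
    (hW' : ∀ t ≥ (0:ℝ), W' t ≤ -cp * (W t) ^ α - cq * (W t) ^ β) :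
    ∀ t : ℝ, 1 / (cp * (1 - α)) + 1 / (cq * (β - 1)) ≤ t → W t = 0 := by
  set Tp := 1 / (cp * (1 - α)) with hTp
  set Tq := 1 / (cq * (β - 1)) with hTq
  have hα1' : (0:ℝ) < 1 - α := by linarith
  have hβ1' : (0:ℝ) < β - 1 := by linarith
  have hTppos : 0 < Tp := by positivity
  have hTqpos : 0 < Tq := by positivity
  -- W is antitone on [0, ∞)
  have hanti : AntitoneOn W (Ici (0:ℝ)) := by
    apply antitoneOn_of_deriv_nonpos (convex_Ici 0)
    · exact fun t ht => (hW t ht).continuousAt.continuousWithinAt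
    · rw [interior_Ici]
      exact fun t ht => ((hW t (le_of_lt ht)).differentiableAt).differentiableWithinAt
    · rw [interior_Ici]
      intro t ht
      have ht' : (0:ℝ) ≤ t := le_of_lt ht
      rw [(hW t ht').deriv]
      have h1 : 0 ≤ (W t) ^ α := Real.rpow_nonneg (hW0 t ht') _
      have h2 : 0 ≤ (W t) ^ β := Real.rpow_nonneg (hW0 t ht') _
      have := hW' t ht'
      nlinarith
  -- Phase 1: W Tq ≤ 1
  have hWTq : W Tq ≤ 1 := by
    by_contra hcon
    push_neg at hcon
    have hgt : ∀ t ∈ Icc (0:ℝ) Tq, 1 < W t := fun t ht =>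
      lt_of_lt_of_le hcon (hanti ht.1 (le_of_lt hTqpos) ht.2)
    set φ : ℝ → ℝ := fun t => (W t) ^ (-(β - 1)) - cq * (β - 1) * t with hφ
    have hder : ∀ t ∈ Ioo (0:ℝ) Tq, HasDerivAt φ
        (W' t * (-(β - 1)) * (W t) ^ (-(β - 1) - 1) - cq * (β - 1)) t := by
      intro t ht
      have ht0 : (0:ℝ) ≤ t := le_of_lt ht.1
      have hWpos : 0 < W t := lt_trans one_pos (hgt t ⟨ht0, le_of_lt ht.2⟩)
      have := ((hW t ht0).rpow_const (p := -(β - 1)) (Or.inl (ne_of_gt hWpos)))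
      simpa [hφ, mul_comm] using this.fun_sub ((hasDerivAt_id t).const_mul (cq * (β - 1)))
    have hmono : MonotoneOn φ (Icc (0:ℝ) Tq) := by
      apply monotoneOn_of_deriv_nonneg (convex_Icc 0 Tq)
      · apply ContinuousOn.sub
        · exact ContinuousOn.rpow_const
            (fun t ht => (hW t ht.1).continuousAt.continuousWithinAt)
            (fun t ht => Or.inl (ne_of_gt (lt_trans one_pos (hgt t ht))))
        · exact (continuous_const.mul continuous_id).continuousOn
      · rw [interior_Icc]
        exact fun t ht => (hder t ht).differentiableAt.differentiableWithinAt
      · rw [interior_Icc]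
        intro t ht
        have ht0 : (0:ℝ) ≤ t := le_of_lt ht.1
        have hWpos : 0 < W t := lt_trans one_pos (hgt t ⟨ht0, le_of_lt ht.2⟩)
        rw [(hder t ht).deriv]
        have hkey : cq * (β - 1) ≤ W' t * (-(β - 1)) * (W t) ^ (-(β - 1) - 1) := by
          have hb : W' t ≤ -cq * (W t) ^ β := by
            have := hW' t ht0
            have h1 : 0 ≤ (W t) ^ α := Real.rpow_nonneg (le_of_lt hWpos) _
            nlinarith
          have hpw : 0 ≤ (β - 1) * (W t) ^ (-(β - 1) - 1) := by positivity
          have hmul := mul_le_mul_of_nonneg_right hb hpw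
          have hcomb : (W t) ^ β * ((W t) ^ (-(β - 1) - 1)) = 1 := by
            rw [← Real.rpow_add hWpos]
            norm_num
          have h2 : -cq * (W t) ^ β * ((β - 1) * (W t) ^ (-(β - 1) - 1))
              = -(cq * (β - 1)) := by
            rw [show -cq * (W t) ^ β * ((β - 1) * (W t) ^ (-(β - 1) - 1))
                = -(cq * (β - 1)) * ((W t) ^ β * (W t) ^ (-(β - 1) - 1)) by ring,
              hcomb, mul_one]
          rw [h2] at hmul
          nlinarith [hmul]
        linarith
    have h0 : φ 0 ≤ φ Tq :=
      hmono ⟨le_refl 0, le_of_lt hTqpos⟩ ⟨le_of_lt hTqpos, le_refl Tq⟩ (le_of_lt hTqpos)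
    have hcqTq : cq * (β - 1) * Tq = 1 := by
      rw [hTq]; field_simp
    have hlt1 : (W Tq) ^ (-(β - 1)) < 1 :=
      Real.rpow_lt_one_of_one_lt_of_neg hcon (by linarith)
    have hge0 : 0 ≤ (W 0) ^ (-(β - 1)) :=
      Real.rpow_nonneg (hW0 0 le_rfl) _
    simp only [hφ, mul_zero, sub_zero, hcqTq] at h0
    linarith
  -- Phase 2: W (Tq + Tp) = 0
  have hT0 : (0:ℝ) ≤ Tq + Tp := by linarith
  have hWT : W (Tq + Tp) = 0 := by
    refine le_antisymm ?_ (hW0 _ hT0)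
    by_contra hcon
    push_neg at hcon
    have hpos : ∀ t ∈ Icc Tq (Tq + Tp), 0 < W t := fun t ht =>
      lt_of_lt_of_le hcon (hanti (le_trans (le_of_lt hTqpos) ht.1) hT0 ht.2)
    set φ : ℝ → ℝ := fun t => (W t) ^ (1 - α) + cp * (1 - α) * t with hφ
    have hder : ∀ t ∈ Ioo Tq (Tq + Tp), HasDerivAt φ
        (W' t * (1 - α) * (W t) ^ (1 - α - 1) + cp * (1 - α)) t := by
      intro t ht
      have ht0 : (0:ℝ) ≤ t := le_trans (le_of_lt hTqpos) (le_of_lt ht.1)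
      have hWpos : 0 < W t := hpos t ⟨le_of_lt ht.1, le_of_lt ht.2⟩
      have := ((hW t ht0).rpow_const (p := 1 - α) (Or.inl (ne_of_gt hWpos)))
      simpa [hφ, mul_comm] using this.fun_add ((hasDerivAt_id t).const_mul (cp * (1 - α)))
    have hmono : AntitoneOn φ (Icc Tq (Tq + Tp)) := by
      apply antitoneOn_of_deriv_nonpos (convex_Icc _ _)
      · apply ContinuousOn.add
        · exact ContinuousOn.rpow_const
            (fun t ht => (hW t (le_trans (le_of_lt hTqpos) ht.1)).continuousAt.continuousWithinAt)
            (fun t ht => Or.inr (le_of_lt hα1'))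
        · exact (continuous_const.mul continuous_id).continuousOn
      · rw [interior_Icc]
        exact fun t ht => (hder t ht).differentiableAt.differentiableWithinAt
      · rw [interior_Icc]
        intro t ht
        have ht0 : (0:ℝ) ≤ t := le_trans (le_of_lt hTqpos) (le_of_lt ht.1)
        have hWpos : 0 < W t := hpos t ⟨le_of_lt ht.1, le_of_lt ht.2⟩
        rw [(hder t ht).deriv]
        have hb : W' t ≤ -cp * (W t) ^ α := by
          have := hW' t ht0
          have h2 : 0 ≤ (W t) ^ β := Real.rpow_nonneg (le_of_lt hWpos) _
          nlinarith
        have hpw : 0 ≤ (1 - α) * (W t) ^ (1 - α - 1) := by positivity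
        have hmul := mul_le_mul_of_nonneg_right hb hpw
        have hcomb : (W t) ^ α * ((W t) ^ (1 - α - 1)) = 1 := by
          rw [← Real.rpow_add hWpos]
          norm_num
        have h2 : -cp * (W t) ^ α * ((1 - α) * (W t) ^ (1 - α - 1))
            = -(cp * (1 - α)) := by
          rw [show -cp * (W t) ^ α * ((1 - α) * (W t) ^ (1 - α - 1))
              = -(cp * (1 - α)) * ((W t) ^ α * (W t) ^ (1 - α - 1)) by ring,
            hcomb, mul_one]
        rw [h2] at hmul
        nlinarith [hmul]
    have h0 : φ (Tq + Tp) ≤ φ Tq :=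
      hmono ⟨le_refl Tq, by linarith⟩ ⟨by linarith, le_refl _⟩ (by linarith)
    have hcpTp : cp * (1 - α) * Tp = 1 := by
      rw [hTp]; field_simp
    have hle1 : (W Tq) ^ (1 - α) ≤ 1 :=
      Real.rpow_le_one (hW0 Tq (le_of_lt hTqpos)) hWTq (le_of_lt hα1')
    have hgt0 : 0 < (W (Tq + Tp)) ^ (1 - α) := Real.rpow_pos_of_pos hcon _
    simp only [hφ] at h0
    nlinarith [h0, hcpTp, hle1, hgt0]
  -- Conclusion
  intro t ht
  have htT : Tq + Tp ≤ t := by linarith [ht]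
  have ht0 : (0:ℝ) ≤ t := le_trans hT0 htT
  refine le_antisymm ?_ (hW0 t ht0)
  calc W t ≤ W (Tq + Tp) := hanti hT0 ht0 htT
    _ = 0 := hWT

lemma grad_inner' {n : ℕ} (F : EuclideanSpace ℝ (Fin n) → ℝ)
    (z v : EuclideanSpace ℝ (Fin n)) :
    ⟪gradient F z, v⟫ = fderiv ℝ F z v := by
  rw [gradient, InnerProductSpace.toDual_symm_apply]

set_option maxHeartbeats 1000000 in
/-- Theorem 5: fixed-time convergence of the FxT proximal gradient flow for
nonsmooth composite optimization, stated via the forward–backward envelope F,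
the prox-gradient mapping H, and the proximal Polyak–Łojasiewicz inequality. -/
theorem fxt_proximal_gradient_flow
    {n : ℕ} (Lf lam μ κp κq p q : ℝ)
    (hLf : 0 < Lf) (hlam : lam ∈ Set.Ioo (0:ℝ) (1 / Lf)) (hμ : 0 < μ)
    (hκp : 0 < κp) (hκq : 0 < κq) (hp : p ∈ Set.Ico (0:ℝ) 1) (hq : 1 < q)
    (f : EuclideanSpace ℝ (Fin n) → ℝ) (hf : ContDiff ℝ 2 f)
    (hHess : ∀ z h, ⟪fderiv ℝ (gradient f) z h, h⟫ ≤ Lf * ‖h‖ ^ 2)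
    (F : EuclideanSpace ℝ (Fin n) → ℝ) (hF : ContDiff ℝ 1 F)
    (Fstar : ℝ) (hFatt : ∃ z, F z = Fstar) (hFlb : ∀ z, Fstar ≤ F z)
    (H : EuclideanSpace ℝ (Fin n) → EuclideanSpace ℝ (Fin n))
    (hgradF : ∀ z, gradient F z = H z - lam • fderiv ℝ (gradient f) z (H z))
    (hPPL : ∀ z, μ * (F z - Fstar) ≤ (1/2) * ‖H z‖ ^ 2)
    (x : ℝ → EuclideanSpace ℝ (Fin n))
    (hx : ∀ t ≥ (0:ℝ), HasDerivAt x
      (-((κp / ‖H (x t)‖ ^ (1 - p)) • H (x t))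
        - (κq * ‖H (x t)‖ ^ (q - 1)) • H (x t)) t) :
    ∀ t : ℝ, (1 / (μ * (1 - lam * Lf))) * (1 / (κp * (1 - p)) + 1 / (κq * (q - 1))) ≤ t →
      F (x t) = Fstar := by
  obtain ⟨hlam0, hlam1⟩ := hlam
  obtain ⟨hp0, hp1⟩ := hp
  have ha : 0 < 1 - lam * Lf := by
    have := (lt_div_iff₀ hLf).mp hlam1
    linarith
  set a : ℝ := 1 - lam * Lf with ha'
  set α : ℝ := (1 + p) / 2 with hα'
  set β : ℝ := (1 + q) / 2 with hβ'
  set cp : ℝ := 2 * μ * a * κp with hcp'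
  set cq : ℝ := 2 * μ * a * κq with hcq'
  have hcp : 0 < cp := by positivity
  have hcq : 0 < cq := by positivity
  set v : ℝ → EuclideanSpace ℝ (Fin n) := fun t =>
    -((κp / ‖H (x t)‖ ^ (1 - p)) • H (x t)) - (κq * ‖H (x t)‖ ^ (q - 1)) • H (x t) with hv'
  set W : ℝ → ℝ := fun t => 2 * μ * (F (x t) - Fstar) with hWdef
  set W' : ℝ → ℝ := fun t => 2 * μ * fderiv ℝ F (x t) (v t) with hW'def
  have hFd : Differentiable ℝ F := hF.differentiable one_ne_zero
  have hW : ∀ t ≥ (0:ℝ), HasDerivAt W (W' t) t := by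
    intro t ht
    exact (((hFd (x t)).hasFDerivAt.comp_hasDerivAt t (hx t ht)).sub_const Fstar).const_mul (2 * μ)
  have hW0 : ∀ t ≥ (0:ℝ), 0 ≤ W t := by
    intro t _
    have := hFlb (x t)
    simp only [hWdef]
    nlinarith
  have hW' : ∀ t ≥ (0:ℝ), W' t ≤ -cp * (W t) ^ α - cq * (W t) ^ β := by
    intro t ht
    set z := x t with hz'
    set h := H z with hh'
    set r : ℝ := ‖h‖ with hr'
    set c : ℝ := κp / r ^ (1 - p) + κq * r ^ (q - 1) with hc'
    have hr0 : (0:ℝ) ≤ r := norm_nonneg _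
    have hcnn : 0 ≤ c := by positivity
    set A := fderiv ℝ (gradient f) z with hA'
    -- inner product computation
    have hvc : v t = -(c • h) := by
      simp only [hv', hc', add_smul]
      module
    have hinner : fderiv ℝ F z (v t) = -(c * (r ^ 2 - lam * ⟪A h, h⟫)) := by
      rw [← grad_inner', hgradF, hvc]
      rw [inner_neg_right, real_inner_smul_right, inner_sub_left,
        real_inner_smul_left, real_inner_self_eq_norm_sq]
    -- quadratic lower bound
    have hAh := hHess z h
    have hquad : a * r ^ 2 ≤ r ^ 2 - lam * ⟪A h, h⟫ := by
      have := mul_le_mul_of_nonneg_left hAh (le_of_lt hlam0)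
      simp only [ha']
      nlinarith
    have hstep : fderiv ℝ F z (v t) ≤ -(c * (a * r ^ 2)) := by
      rw [hinner]
      exact neg_le_neg (mul_le_mul_of_nonneg_left hquad hcnn)
    -- c * r^2 = κp r^{1+p} + κq r^{1+q}
    have hnp : (r : ℝ) ^ 2 = r ^ ((2:ℝ)) := by
      rw [show ((2:ℝ)) = ((2:ℕ):ℝ) by norm_num, Real.rpow_natCast]
    have hcr : c * r ^ 2 = κp * r ^ (1 + p) + κq * r ^ (1 + q) := by
      rcases eq_or_lt_of_le hr0 with hr | hr
      · rw [hc', ← hr]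
        rw [Real.zero_rpow (by linarith : (1:ℝ) - p ≠ 0),
          Real.zero_rpow (by linarith : q - 1 ≠ 0),
          Real.zero_rpow (by positivity : (1:ℝ) + p ≠ 0),
          Real.zero_rpow (by positivity : (1:ℝ) + q ≠ 0)]
        simp
      · have e1 : r ^ ((2:ℝ)) / r ^ (1 - p) = r ^ (1 + p) := by
          rw [← Real.rpow_sub hr, show (2:ℝ) - (1 - p) = 1 + p by ring]
        have e2 : r ^ (q - 1) * r ^ ((2:ℝ)) = r ^ (1 + q) := by
          rw [← Real.rpow_add hr, show q - 1 + 2 = 1 + q by ring]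
        calc c * r ^ 2 = κp * (r ^ ((2:ℝ)) / r ^ (1 - p)) + κq * (r ^ (q - 1) * r ^ ((2:ℝ))) := by
              rw [hc', hnp]; ring
          _ = κp * r ^ (1 + p) + κq * r ^ (1 + q) := by rw [e1, e2]
    -- PPL : W t ≤ r^2
    have hWr : W t ≤ r ^ 2 := by
      have h1 := hPPL (x t)
      have hr2 : r = ‖H (x t)‖ := by rw [hr', hh', hz']
      simp only [hWdef, hr2]
      linarith
    have hWnn : 0 ≤ W t := hW0 t ht
    have hpow : ∀ s : ℝ, 0 ≤ s → (W t) ^ ((1 + s)/2) ≤ r ^ (1 + s) := by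
      intro s hs
      have h1 : (r ^ ((2:ℝ))) ^ ((1 + s)/2) = r ^ (1 + s) := by
        rw [← Real.rpow_mul hr0, show (2:ℝ) * ((1 + s)/2) = 1 + s by ring]
      calc (W t) ^ ((1 + s)/2) ≤ (r ^ ((2:ℝ))) ^ ((1 + s)/2) :=
            Real.rpow_le_rpow hWnn (by rw [← hnp]; exact hWr) (by linarith)
        _ = r ^ (1 + s) := h1
    have hpα : (W t) ^ α ≤ r ^ (1 + p) := hpow p hp0
    have hpβ : (W t) ^ β ≤ r ^ (1 + q) := hpow q (by linarith)
    -- combine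
    have hfin := mul_le_mul_of_nonneg_left hstep (by positivity : (0:ℝ) ≤ 2 * μ)
    simp only [hW'def]
    calc 2 * μ * fderiv ℝ F (x t) (v t) ≤ 2 * μ * (-(c * (a * r ^ 2))) := hfin
      _ = -(2 * μ * a) * (c * r ^ 2) := by ring
      _ = -(2 * μ * a) * (κp * r ^ (1 + p) + κq * r ^ (1 + q)) := by rw [hcr]
      _ = -cp * r ^ (1 + p) - cq * r ^ (1 + q) := by rw [hcp', hcq']; ring
      _ ≤ -cp * (W t) ^ α - cq * (W t) ^ β := by nlinarith [hpα, hpβ, hcp, hcq]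
  -- apply the scalar fixed-time lemma
  have hscalar := fxt_scalar cp cq α β hcp hcq (by positivity)
    (by rw [hα']; linarith) (by rw [hβ']; linarith) W W' hW hW0 hW'
  intro t ht
  have hTeq : 1 / (cp * (1 - α)) + 1 / (cq * (β - 1))
      = (1 / (μ * (1 - lam * Lf))) * (1 / (κp * (1 - p)) + 1 / (κq * (q - 1))) := by
    have e1 : cp * (1 - α) = (μ * (1 - lam * Lf)) * (κp * (1 - p)) := by
      rw [hcp', hα', ha']; ring
    have e2 : cq * (β - 1) = (μ * (1 - lam * Lf)) * (κq * (q - 1)) := by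
      rw [hcq', hβ', ha']; ring
    rw [e1, e2]; simp only [mul_add, one_div, mul_inv]
  have hWt : W t = 0 := hscalar t (by rw [hTeq]; exact ht)
  simp only [hWdef] at hWt
  have h2μ : (2 * μ : ℝ) ≠ 0 := by positivity
  have := (mul_eq_zero.mp hWt).resolve_left h2μ
  linarith
end

section
/- Let f : ℝ^n → ℝ be continuously differentiable, attain its minimum value f* at some point, and satisfy the Polyak–Łojasiewicz (PL) inequality with parameter μ > 0: (1/2)‖∇f(z)‖₂² ≥ μ(f(z) − f*) for all z ∈ ℝ^n. Let p ∈ [0,1), α = (p+1)/2, a = (2μ)^α. Suppose x : [0,∞) → ℝ^n is differentiable and x′(t) = −∇f(x(t))/‖∇f(x(t))‖₂^{1−p} for all t ≥ 0 (the right-hand side interpreted as 0 when ∇f(x(t)) = 0). Then for every T ≥ 0, the static regret satisfies ∫₀^T (f(x(t)) − f*) dt ≤ V₀^{2−α}/(a(2−α)), where V₀ = f(x(0)) − f*. (Theorem 6, regret bound for the flow g_p.) -/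
open MeasureTheory intervalIntegral Set

/-- Theorem 6 (regret bound for the flow g_p): static regret bound for the
finite-time rescaled gradient flow. -/
theorem regret_bound_gp_flow
    {n : ℕ} (f : EuclideanSpace ℝ (Fin n) → ℝ) (fstar μ p : ℝ)
    (hf : ContDiff ℝ 1 f)
    (hmin : ∃ z, f z = fstar) (hlb : ∀ z, fstar ≤ f z)
    (hμ : 0 < μ)
    (hPL : ∀ z, μ * (f z - fstar) ≤ (1/2) * ‖gradient f z‖ ^ 2)
    (hp : p ∈ Set.Ico (0:ℝ) 1)
    (x : ℝ → EuclideanSpace ℝ (Fin n))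
    (hx : ∀ t ≥ (0:ℝ), HasDerivAt x
      (-((‖gradient f (x t)‖ ^ (1 - p))⁻¹ • gradient f (x t))) t) :
    ∀ T ≥ (0:ℝ),
      ∫ t in (0:ℝ)..T, (f (x t) - fstar) ≤
        (f (x 0) - fstar) ^ (2 - (p + 1)/2) / ((2 * μ) ^ ((p + 1)/2) * (2 - (p + 1)/2)) := by
  intro T hT
  obtain ⟨hp0, hp1⟩ := hp
  set α : ℝ := (p + 1)/2 with hαdef
  have hα1 : α < 1 := by rw [hαdef]; linarith
  have hα0 : 0 < α := by rw [hαdef]; linarith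
  have h2α : 1 ≤ 2 - α := by linarith
  have hμ2 : (0:ℝ) < 2 * μ := by linarith
  set V : ℝ → ℝ := fun s => f (x s) - fstar with hVdef
  have hVnn : ∀ s, 0 ≤ V s := fun s => sub_nonneg.2 (hlb _)
  set c : ℝ := (2 * μ) ^ α * (2 - α) with hcdef
  have hc : 0 < c := mul_pos (Real.rpow_pos_of_pos hμ2 α) (by linarith)
  set g : ℝ → EuclideanSpace ℝ (Fin n) := fun s => gradient f (x s) with hgdef
  -- derivative of V
  have hVd : ∀ t, 0 ≤ t → HasDerivAt V (-(‖g t‖ ^ (1 + p))) t := by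
    intro t ht
    have hd : DifferentiableAt ℝ f (x t) := (hf.differentiable one_ne_zero).differentiableAt
    have hgr : HasFDerivAt f ((InnerProductSpace.toDual ℝ _) (g t)) (x t) :=
      hd.hasGradientAt.hasFDerivAt
    have hcomp := hgr.comp_hasDerivAt t (hx t ht)
    have hval : (InnerProductSpace.toDual ℝ (EuclideanSpace ℝ (Fin n))) (g t)
        (-((‖g t‖ ^ (1 - p))⁻¹ • g t)) = -(‖g t‖ ^ (1 + p)) := by
      rw [map_neg, _root_.map_smul]
      simp only [InnerProductSpace.toDual_apply_apply, smul_eq_mul]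
      rw [real_inner_self_eq_norm_sq]
      rcases eq_or_lt_of_le (norm_nonneg (g t)) with h0 | h0
      · rw [← h0, Real.zero_rpow (by linarith), Real.zero_rpow (by linarith)]
        simp
      · rw [← Real.rpow_natCast ‖g t‖ 2, ← Real.rpow_neg_one (‖g t‖ ^ (1 - p)),
          ← Real.rpow_mul (le_of_lt h0), ← Real.rpow_add h0]
        have hexp : (1 - p) * (-1) + ((2:ℕ):ℝ) = 1 + p := by push_cast; ring
        rw [hexp]
    have : HasDerivAt (fun s => f (x s)) (-(‖g t‖ ^ (1 + p))) t := by
      rw [← hval]; exact hcomp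
    simpa [hVdef] using this.sub_const fstar
  -- key inequality
  have key : ∀ t, c * V t ≤ ‖g t‖ ^ (1 + p) * ((2 - α) * V t ^ (1 - α)) := by
    intro t
    have hPLt : 2 * μ * V t ≤ ‖g t‖ ^ (2:ℕ) := by
      have := hPL (x t); simp only [hVdef, hgdef]; nlinarith [hPL (x t)]
    have h1 : ((2 * μ) * V t) ^ α ≤ (‖g t‖ ^ (2:ℕ) : ℝ) ^ α :=
      Real.rpow_le_rpow (mul_nonneg (le_of_lt hμ2) (hVnn t)) hPLt (le_of_lt hα0)
    have h2 : ((‖g t‖ ^ (2:ℕ) : ℝ)) ^ α = ‖g t‖ ^ (1 + p) := by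
      rw [← Real.rpow_natCast ‖g t‖ 2, ← Real.rpow_mul (norm_nonneg _)]
      norm_num
      rw [hαdef]
      ring_nf
    have h3 : ((2 * μ) * V t) ^ α = (2 * μ) ^ α * V t ^ α :=
      Real.mul_rpow (le_of_lt hμ2) (hVnn t)
    have h4 : (2 * μ) ^ α * V t ^ α ≤ ‖g t‖ ^ (1 + p) := by
      rw [← h3, ← h2]; exact h1
    have h5 : V t = V t ^ α * V t ^ (1 - α) := by
      rw [← Real.rpow_add' (hVnn t) (by norm_num), ]
      norm_num
    calc c * V t = ((2 - α) * V t ^ (1 - α)) * ((2 * μ) ^ α * V t ^ α) := by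
          rw [hcdef]; nth_rewrite 1 [h5]; ring
      _ ≤ ((2 - α) * V t ^ (1 - α)) * (‖g t‖ ^ (1 + p)) := by
          apply mul_le_mul_of_nonneg_left h4
          have := Real.rpow_nonneg (hVnn t) (1 - α)
          nlinarith
      _ = ‖g t‖ ^ (1 + p) * ((2 - α) * V t ^ (1 - α)) := by ring
  -- continuity of V on [0,∞)
  have hVcont : ∀ t, 0 ≤ t → ContinuousAt V t := by
    intro t ht
    exact (hf.continuous.continuousAt.comp (hx t ht).continuousAt).sub continuousAt_const
  have hVcontOn : ContinuousOn V (Ici (0:ℝ)) := fun t ht => (hVcont t ht).continuousWithinAt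
  -- the auxiliary function
  set Φ : ℝ → ℝ := fun u => (∫ s in (0:ℝ)..u, V s) + (V u) ^ (2 - α) / c with hΦdef
  have hint : ∀ b ∈ Icc (0:ℝ) T, IntervalIntegrable V volume 0 b := by
    intro b hb
    apply ContinuousOn.intervalIntegrable
    apply hVcontOn.mono
    rw [uIcc_of_le hb.1]
    exact fun s hs => hs.1
  have hΦderiv : ∀ t ∈ Ioo (0:ℝ) T, HasDerivAt Φ
      (V t + (-(‖g t‖ ^ (1 + p)) * (2 - α) * V t ^ (2 - α - 1)) / c) t := by
    intro t ht
    have htmem : t ∈ Icc (0:ℝ) T := ⟨le_of_lt ht.1, le_of_lt ht.2⟩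
    have hFTC : HasDerivAt (fun u => ∫ s in (0:ℝ)..u, V s) (V t) t := by
      apply intervalIntegral.integral_hasDerivAt_right (hint t htmem)
      · exact (hVcontOn.mono (fun s hs => le_of_lt hs)).stronglyMeasurableAtFilter
          isOpen_Ioi t ht.1
      · exact hVcont t (le_of_lt ht.1)
    have hW : HasDerivAt (fun u => (V u) ^ (2 - α)) (-(‖g t‖ ^ (1 + p)) * (2 - α) * V t ^ (2 - α - 1)) t :=
      (hVd t (le_of_lt ht.1)).rpow_const (Or.inr h2α)
    exact hFTC.add (hW.div_const c)
  have hΦcont : ContinuousOn Φ (Icc 0 T) := by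
    apply ContinuousOn.add
    · have := intervalIntegral.continuousOn_primitive_interval' (hint T (right_mem_Icc.2 hT))
        (by rw [uIcc_of_le hT]; exact left_mem_Icc.2 hT)
      rwa [uIcc_of_le hT] at this
    · apply ContinuousOn.div_const
      exact fun t ht => ((hVcont t ht.1).continuousWithinAt).rpow_const (Or.inr (by linarith))
  have hanti : AntitoneOn Φ (Icc 0 T) := by
    apply antitoneOn_of_deriv_nonpos (convex_Icc 0 T) hΦcont
    · intro t ht
      rw [interior_Icc] at ht
      exact (hΦderiv t ht).differentiableAt.differentiableWithinAt
    · intro t ht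
      rw [interior_Icc] at ht
      rw [(hΦderiv t ht).deriv]
      have hk := key t
      have h1α : (2:ℝ) - α - 1 = 1 - α := by ring
      rw [h1α]
      have hle : V t ≤ ‖g t‖ ^ (1 + p) * (2 - α) * V t ^ (1 - α) / c := by
        rw [le_div_iff₀ hc]
        calc V t * c = c * V t := by ring
          _ ≤ ‖g t‖ ^ (1 + p) * ((2 - α) * V t ^ (1 - α)) := hk
          _ = ‖g t‖ ^ (1 + p) * (2 - α) * V t ^ (1 - α) := by ring
      have heq : -(‖g t‖ ^ (1 + p)) * (2 - α) * V t ^ (1 - α) / c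
          = -(‖g t‖ ^ (1 + p) * (2 - α) * V t ^ (1 - α) / c) := by ring
      rw [heq]
      linarith
  have hfinal : Φ T ≤ Φ 0 := hanti (left_mem_Icc.2 hT) (right_mem_Icc.2 hT) hT
  have hΦ0 : Φ 0 = (V 0) ^ (2 - α) / c := by
    simp [hΦdef, intervalIntegral.integral_same]
  have hVT : 0 ≤ (V T) ^ (2 - α) / c := div_nonneg (Real.rpow_nonneg (hVnn T) _) (le_of_lt hc)
  have : (∫ s in (0:ℝ)..T, V s) ≤ (V 0) ^ (2 - α) / c := by
    have := hfinal
    rw [hΦ0] at this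
    simp only [hΦdef] at this
    linarith
  simpa [hVdef, hcdef, hαdef] using this
end

section
/- Let f : ℝ^n → ℝ be continuously differentiable, attain its minimum value f* at some point, and satisfy the Polyak–Łojasiewicz (PL) inequality with parameter μ > 0: (1/2)‖∇f(z)‖₂² ≥ μ(f(z) − f*) for all z ∈ ℝ^n. Suppose x : [0,∞) → ℝ^n is differentiable and x′(t) = −e^{‖∇f(x(t))‖₂}·∇f(x(t))/‖∇f(x(t))‖₂ for all t ≥ 0 (the right-hand side interpreted as 0 when ∇f(x(t)) = 0). Then for every T ≥ 0, the static regret satisfies ∫₀^T (f(x(t)) − f*) dt ≤ 1/μ²; in particular the regret is bounded by a constant independent of the initial state x(0). (Theorem 6, regret bound for the exponential flow g_e.) -/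
open Real MeasureTheory intervalIntegral Set

/-- Helper integrand for the Lyapunov function. -/
noncomputable def qfun (μ v : ℝ) : ℝ :=
  Real.sqrt (v / (2*μ)) * Real.exp (-Real.sqrt (2*μ*v))

lemma qfun_cont (μ : ℝ) : Continuous (qfun μ) := by
  unfold qfun; fun_prop

lemma qfun_nonneg (μ v : ℝ) : 0 ≤ qfun μ v :=
  mul_nonneg (Real.sqrt_nonneg _) (Real.exp_pos _).le

/-- Lyapunov function. -/
noncomputable def Phi (μ u : ℝ) : ℝ := ∫ v in (0:ℝ)..u, qfun μ v

lemma Phi_hasDerivAt (μ u : ℝ) : HasDerivAt (Phi μ) (qfun μ u) u :=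
  ((qfun_cont μ).integral_hasStrictDerivAt 0 u).hasDerivAt

lemma Phi_continuous (μ : ℝ) : Continuous (Phi μ) :=
  continuous_iff_continuousAt.2 fun u => (Phi_hasDerivAt μ u).continuousAt

lemma Phi_nonneg (μ : ℝ) {u : ℝ} (hu : 0 ≤ u) : 0 ≤ Phi μ u :=
  intervalIntegral.integral_nonneg hu (fun v _ => qfun_nonneg μ v)

lemma antideriv_sq_exp (μ s : ℝ) :
    HasDerivAt (fun s : ℝ => -(s^2+2*s+2)*Real.exp (-s)/(2*μ^2))
      (s^2*Real.exp (-s)/(2*μ^2)) s := by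
  have h1 : HasDerivAt (fun s : ℝ => -(s^2+2*s+2)) (-(2*s+2)) s := by
    have := ((hasDerivAt_pow 2 s).add ((hasDerivAt_id s).const_mul 2)).add_const 2
    exact this.neg.congr_deriv (by norm_num)
  have h2 : HasDerivAt (fun s : ℝ => Real.exp (-s)) (-Real.exp (-s)) s := by
    exact ((Real.hasDerivAt_exp (-s)).comp s (hasDerivAt_neg s)).congr_deriv (by ring)
  have := (h1.mul h2).div_const (2*μ^2)
  exact this.congr_deriv (by ring)

lemma Phi_le {μ : ℝ} (hμ : 0 < μ) (u : ℝ) : Phi μ u ≤ 1 / μ^2 := by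
  rcases le_or_gt u 0 with hu | hu
  · have h1 : Phi μ u ≤ 0 := by
      have h2 : 0 ≤ ∫ v in u..(0:ℝ), qfun μ v :=
        intervalIntegral.integral_nonneg hu (fun v _ => qfun_nonneg μ v)
      rw [Phi, intervalIntegral.integral_symm]
      linarith
    have : (0:ℝ) ≤ 1/μ^2 := by positivity
    linarith
  · set S := Real.sqrt (2*μ*u) with hS
    have hS0 : 0 ≤ S := Real.sqrt_nonneg _
    have hSsq : S^2 = 2*μ*u := Real.sq_sqrt (by positivity)
    have hCoV : Phi μ u = ∫ s in (0:ℝ)..S, (qfun μ ∘ (fun s => s^2/(2*μ))) s * (s/μ) := by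
      rw [intervalIntegral.integral_comp_mul_deriv (f := fun s => s^2/(2*μ))
          (f' := fun s => s/μ) (g := qfun μ) ?_ ?_ (qfun_cont μ)]
      · norm_num
        congr 1
        rw [hSsq]; field_simp
      · intro t _ht
        have := (hasDerivAt_pow 2 t).div_const (2*μ)
        exact this.congr_deriv (by field_simp; ring)
      · exact (continuous_id.div_const μ).continuousOn
    have hcongr : ∀ s ∈ uIcc (0:ℝ) S,
        (qfun μ ∘ (fun s => s^2/(2*μ))) s * (s/μ) = s^2*Real.exp (-s)/(2*μ^2) := by
      intro s hs
      rw [uIcc_of_le hS0] at hs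
      have hs0 : 0 ≤ s := hs.1
      have h1 : 2*μ*(s^2/(2*μ)) = s^2 := by field_simp
      have h2 : s^2/(2*μ)/(2*μ) = (s/(2*μ))^2 := by ring
      simp only [Function.comp, qfun, h1, h2, Real.sqrt_sq hs0,
        Real.sqrt_sq (by positivity : (0:ℝ) ≤ s/(2*μ))]
      field_simp
    rw [hCoV, intervalIntegral.integral_congr hcongr,
      intervalIntegral.integral_eq_sub_of_hasDerivAt
        (fun s _ => antideriv_sq_exp μ s)
        (((continuous_pow 2).mul (Real.continuous_exp.comp continuous_neg)).div_const
          (2*μ^2)).continuousOn.intervalIntegrable]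
    have hpos : 0 ≤ (S^2+2*S+2)*Real.exp (-S) := by positivity
    have he0 : Real.exp (-(0:ℝ)) = 1 := by norm_num
    rw [div_sub_div_same, div_le_div_iff₀ (by positivity : (0:ℝ) < 2*μ^2)
      (by positivity : (0:ℝ) < μ^2)]
    nlinarith [hpos, sq_nonneg μ]

/-- The key pointwise inequality. -/
lemma key_ineq {μ h g : ℝ} (hμ : 0 < μ) (hh : 0 ≤ h) (hg : 0 ≤ g)
    (hPL : 2*μ*h ≤ g^2) : h ≤ qfun μ h * (Real.exp g / g * g^2) := by
  rcases eq_or_lt_of_le hh with he | hpos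
  · rw [← he]
    exact mul_nonneg (qfun_nonneg μ _)
      (mul_nonneg (div_nonneg (Real.exp_pos g).le hg) (sq_nonneg g))
  · set s := Real.sqrt (2*μ*h) with hs
    have hs0 : 0 < s := Real.sqrt_pos.2 (by positivity)
    have hsg : s ≤ g := by
      have := Real.sqrt_le_sqrt hPL
      rwa [Real.sqrt_sq hg] at this
    have hgpos : 0 < g := lt_of_lt_of_le hs0 hsg
    have hrw : Real.exp g / g * g^2 = g * Real.exp g := by
      field_simp
    rw [hrw]
    have hmono : s * Real.exp s ≤ g * Real.exp g :=
      mul_le_mul hsg (Real.exp_le_exp.2 hsg) (Real.exp_pos s).le hgpos.le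
    have hq : qfun μ h * (s * Real.exp s) = h := by
      rw [qfun, hs]
      rw [show Real.sqrt (h/(2*μ)) * Real.exp (-Real.sqrt (2*μ*h)) *
          (Real.sqrt (2*μ*h) * Real.exp (Real.sqrt (2*μ*h)))
          = (Real.sqrt (h/(2*μ)) * Real.sqrt (2*μ*h)) *
            (Real.exp (-Real.sqrt (2*μ*h)) * Real.exp (Real.sqrt (2*μ*h))) by ring]
      rw [← Real.exp_add, ← Real.sqrt_mul (by positivity)]
      have : h/(2*μ) * (2*μ*h) = h^2 := by field_simp
      rw [this, Real.sqrt_sq hh]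
      simp
    calc h = qfun μ h * (s * Real.exp s) := hq.symm
    _ ≤ qfun μ h * (g * Real.exp g) :=
        mul_le_mul_of_nonneg_left hmono (qfun_nonneg μ h)

/-- Theorem 6 (regret bound for the exponential flow g_e): the static regret is
bounded by 1/μ², independently of the initial state. -/
theorem regret_bound_exp_flow
    {n : ℕ} (f : EuclideanSpace ℝ (Fin n) → ℝ) (fstar μ : ℝ)
    (hf : ContDiff ℝ 1 f)
    (hmin : ∃ z, f z = fstar) (hlb : ∀ z, fstar ≤ f z)
    (hμ : 0 < μ)
    (hPL : ∀ z, μ * (f z - fstar) ≤ (1/2) * ‖gradient f z‖ ^ 2)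
    (x : ℝ → EuclideanSpace ℝ (Fin n))
    (hx : ∀ t ≥ (0:ℝ), HasDerivAt x
      (-((Real.exp ‖gradient f (x t)‖ / ‖gradient f (x t)‖) • gradient f (x t))) t) :
    ∀ T ≥ (0:ℝ), ∫ t in (0:ℝ)..T, (f (x t) - fstar) ≤ 1 / μ ^ 2 := by
  intro T hT
  set h : ℝ → ℝ := fun t => f (x t) - fstar with hhdef
  set g : ℝ → ℝ := fun t => ‖gradient f (x t)‖ with hgdef
  have hh' : ∀ t ≥ (0:ℝ), HasDerivAt h (-(Real.exp (g t) / g t * (g t)^2)) t := by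
    intro t ht
    have hdiff : DifferentiableAt ℝ f (x t) := (hf.differentiable one_ne_zero).differentiableAt
    have hgr := hdiff.hasGradientAt.hasFDerivAt.comp_hasDerivAt t (hx t ht)
    have h2 : (InnerProductSpace.toDual ℝ (EuclideanSpace ℝ (Fin n)) (gradient f (x t)))
        (-((Real.exp (g t) / g t) • gradient f (x t)))
        = -(Real.exp (g t) / g t * (g t)^2) := by
      simp only [InnerProductSpace.toDual_apply_apply, inner_neg_right, inner_smul_right,
        real_inner_self_eq_norm_sq]
      rfl
    rw [h2] at hgr
    exact hgr.sub_const fstar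
  have hcontAt : ∀ t ≥ (0:ℝ), ContinuousAt h t := fun t ht => (hh' t ht).continuousAt
  have hcontOn : ContinuousOn h (Icc 0 T) := fun t ht =>
    (hcontAt t ht.1).continuousWithinAt
  have hint : IntervalIntegrable h volume 0 T := by
    rw [intervalIntegrable_iff_integrableOn_Icc_of_le hT]
    exact (hcontOn.integrableOn_compact isCompact_Icc)
  -- the combined Lyapunov + regret function
  set G : ℝ → ℝ := fun t => Phi μ (h t) + ∫ s in (0:ℝ)..t, h s with hGdef
  have hGanti : AntitoneOn G (Icc 0 T) := by
    apply antitoneOn_of_hasDerivWithinAt_nonpos (convex_Icc 0 T)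
      (f' := fun t => qfun μ (h t) * (-(Real.exp (g t) / g t * (g t)^2)) + h t)
    · apply ContinuousOn.add
      · exact (Phi_continuous μ).comp_continuousOn hcontOn
      · have : IntegrableOn h (uIcc 0 T) volume := by
          rw [uIcc_of_le hT]
          exact hcontOn.integrableOn_compact isCompact_Icc
        have := intervalIntegral.continuousOn_primitive_interval (f := h) (μ := volume)
          (a := 0) (b := T) this
        rwa [uIcc_of_le hT] at this
    · intro t ht
      rw [interior_Icc] at ht
      have ht0 : (0:ℝ) < t := ht.1
      have hd1 : HasDerivAt (fun t => Phi μ (h t))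
          (qfun μ (h t) * (-(Real.exp (g t) / g t * (g t)^2))) t :=
        (Phi_hasDerivAt μ (h t)).comp t (hh' t ht0.le)
      have hd2 : HasDerivAt (fun t => ∫ s in (0:ℝ)..t, h s) (h t) t := by
        apply intervalIntegral.integral_hasDerivAt_right
        · apply hint.mono_set
          rw [uIcc_of_le hT, uIcc_of_le ht0.le]
          exact Icc_subset_Icc le_rfl ht.2.le
        · exact ContinuousAt.stronglyMeasurableAtFilter isOpen_Ioi
            (fun s hs => hcontAt s (le_of_lt hs)) t ht0
        · exact hcontAt t ht0.le
      rw [interior_Icc]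
      exact ((hd1.add hd2).hasDerivWithinAt)
    · intro t ht
      rw [interior_Icc] at ht
      have hht : 0 ≤ h t := sub_nonneg.2 (hlb (x t))
      have hPLt : 2*μ*(h t) ≤ (g t)^2 := by
        have := hPL (x t)
        simp only [hhdef, hgdef]
        nlinarith
      have := key_ineq hμ hht (norm_nonneg _) hPLt
      nlinarith [this]
  have hG := hGanti (left_mem_Icc.2 hT) (right_mem_Icc.2 hT) hT
  have h0 : G 0 = Phi μ (h 0) := by
    simp [hGdef]
  have hPhiT : 0 ≤ Phi μ (h T) := Phi_nonneg μ (sub_nonneg.2 (hlb (x T)))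
  have hPhi0 : Phi μ (h 0) ≤ 1/μ^2 := Phi_le hμ (h 0)
  have : (∫ s in (0:ℝ)..T, h s) = G T - Phi μ (h T) := by simp [hGdef]
  rw [show (∫ t in (0:ℝ)..T, (f (x t) - fstar)) = ∫ s in (0:ℝ)..T, h s from rfl, this]
  rw [h0] at hG
  linarith
end

section
/- Let f : ℝ^n → ℝ be continuously differentiable, attain its minimum value f* at some point, and satisfy the Polyak–Łojasiewicz (PL) inequality with parameter μ > 0: (1/2)‖∇f(z)‖₂² ≥ μ(f(z) − f*) for all z ∈ ℝ^n. Let p ∈ [0,1) and q > 3; set α = (p+1)/2, β = (q+1)/2 (so β > 2), a = (2μ)^α, b = (2μ)^β. Suppose x : [0,∞) → ℝ^n is differentiable and x′(t) = −(‖∇f(x(t))‖₂^{p−1} + ‖∇f(x(t))‖₂^{q−1})·∇f(x(t)) for all t ≥ 0 (the right-hand side interpreted as 0 when ∇f(x(t)) = 0). Then for every T ≥ 0, the static regret satisfies ∫₀^T (f(x(t)) − f*) dt ≤ 1/(a(2−α)) + 1/(b(β−2)); in particular the regret is bounded by a constant independent of the initial state x(0). (Theorem 6, regret bound for the fixed-time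 flow g_{p,q} with β > 2.) -/
open Set MeasureTheory Filter

theorem regret_aux (a b α β : ℝ) (V W : ℝ → ℝ)
    (ha : 0 < a) (hb : 0 < b) (hα0 : 0 < α) (hα1 : α < 1) (hβ : 2 < β)
    (hV0 : ∀ t, 0 ≤ V t)
    (hVd : ∀ t ≥ (0:ℝ), HasDerivAt V (W t) t)
    (hW : ∀ t ≥ (0:ℝ), W t ≤ -(a * V t ^ α + b * V t ^ β)) :
    ∀ T ≥ (0:ℝ), (∫ t in (0:ℝ)..T, V t) ≤ 1/(a*(2-α)) + 1/(b*(β-2)) := by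
  intro T hT
  have h2α : (0:ℝ) < 2 - α := by linarith
  have hβ2 : (0:ℝ) < β - 2 := by linarith
  set L : ℝ → ℝ := fun v => v ^ (2-α) / (a*(2-α)) with hLdef
  set R : ℝ → ℝ := fun v => 1/(a*(2-α)) + (1 - v ^ (2-β)) / (b*(β-2)) with hRdef
  set H : ℝ → ℝ := fun v => if v ≤ 1 then L v else R v with hHdef
  set D : ℝ → ℝ := fun t => (if V t ≤ 1 then (V t)^(1-α)/a else (V t)^(1-β)/b) * W t with hDdef
  have hWneg : ∀ t ≥ (0:ℝ), W t ≤ 0 := by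
    intro t ht
    have h1 : 0 ≤ a * V t ^ α := mul_nonneg ha.le (Real.rpow_nonneg (hV0 t) α)
    have h2 : 0 ≤ b * V t ^ β := mul_nonneg hb.le (Real.rpow_nonneg (hV0 t) β)
    have := hW t ht; linarith
  have hVcont : ContinuousOn V (Ici 0) := fun t ht => (hVd t ht).continuousAt.continuousWithinAt
  have hanti : AntitoneOn V (Ici 0) := by
    apply antitoneOn_of_deriv_nonpos (convex_Ici 0) hVcont
    · intro t ht
      rw [interior_Ici] at ht
      exact (hVd t (le_of_lt ht)).differentiableAt.differentiableWithinAt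
    · intro t ht
      rw [interior_Ici] at ht
      rw [(hVd t (le_of_lt ht)).deriv]
      exact hWneg t (le_of_lt ht)
  -- derivative of L ∘ V
  have hLd : ∀ t ≥ (0:ℝ), HasDerivAt (fun s => L (V s)) ((V t)^(1-α)/a * W t) t := by
    intro t ht
    have h1 : HasDerivAt (fun s => (V s) ^ (2-α)) ((2-α) * (V t)^(2-α-1) * W t) t := by
      have := (Real.hasDerivAt_rpow_const (x := V t) (p := 2-α)
        (Or.inr (by linarith))).comp t (hVd t ht)
      exact this
    have h2 := h1.div_const (a*(2-α))
    refine h2.congr_deriv ?_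
    rw [show (2:ℝ)-α-1 = 1-α by ring]
    field_simp
  have hRd : ∀ t ≥ (0:ℝ), V t ≠ 0 → HasDerivAt (fun s => R (V s)) ((V t)^(1-β)/b * W t) t := by
    intro t ht hne
    have h1 : HasDerivAt (fun s => (V s) ^ (2-β)) ((2-β) * (V t)^(2-β-1) * W t) t := by
      have := (Real.hasDerivAt_rpow_const (x := V t) (p := 2-β)
        (Or.inl hne)).comp t (hVd t ht)
      exact this
    have h2 := ((h1.const_sub 1).div_const (b*(β-2))).const_add (1/(a*(2-α)))
    refine h2.congr_deriv ?_
    rw [show (2:ℝ)-β-1 = 1-β by ring]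
    field_simp
    ring
  have hgderiv : ∀ t ∈ Ioo 0 T, HasDerivWithinAt (fun s => H (V s)) (D t) (Ioi t) t := by
    intro t ht
    have ht0 : (0:ℝ) ≤ t := ht.1.le
    by_cases h1 : V t ≤ 1
    · have key : ∀ s, t ≤ s → V s ≤ 1 := fun s hs =>
        le_trans (hanti (mem_Ici.mpr ht0) (mem_Ici.mpr (ht0.trans hs)) hs) h1
      have hder : HasDerivWithinAt (fun s => H (V s)) ((V t)^(1-α)/a * W t) (Ioi t) t := by
        apply ((hLd t ht0).hasDerivWithinAt (s := Ioi t)).congr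
        · intro s hs
          show (if V s ≤ 1 then L (V s) else R (V s)) = L (V s)
          rw [if_pos (key s (le_of_lt hs))]
        · show (if V t ≤ 1 then L (V t) else R (V t)) = L (V t)
          rw [if_pos h1]
      simpa only [hDdef, if_pos h1] using hder
    · push_neg at h1
      have hne : V t ≠ 0 := by intro h; rw [h] at h1; linarith
      have hev : ∀ᶠ s in nhds t, 1 < V s :=
        (hVd t ht0).continuousAt.eventually (eventually_gt_nhds h1)
      have heq : (fun s => H (V s)) =ᶠ[nhds t] (fun s => R (V s)) := by
        filter_upwards [hev] with s hs
        simp only [hHdef]; rw [if_neg (not_le.mpr hs)]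
      have hder := ((hRd t ht0 hne).congr_of_eventuallyEq heq).hasDerivWithinAt (s := Ioi t)
      simpa only [hDdef, if_neg (not_le.mpr h1)] using hder
  have hDle : ∀ t ∈ Ioo 0 T, D t ≤ -(V t) := by
    intro t ht
    have ht0 : (0:ℝ) ≤ t := ht.1.le
    have hv0 : 0 ≤ V t := hV0 t
    have hw := hW t ht0
    by_cases h1 : V t ≤ 1
    · simp only [hDdef, if_pos h1]
      rcases eq_or_lt_of_le hv0 with h0 | h0
      · rw [← h0]
        rw [Real.zero_rpow (by linarith : (1:ℝ)-α ≠ 0)]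
        simp
      · have hc : 0 < (V t)^(1-α)/a := div_pos (Real.rpow_pos_of_pos h0 _) ha
        have step := mul_le_mul_of_nonneg_left hw hc.le
        have e1 : (V t)^(1-α) * (V t)^α = V t := by
          rw [← Real.rpow_add h0, show (1:ℝ)-α+α = 1 by ring, Real.rpow_one]
        have e2 : 0 ≤ (V t)^(1-α) * (V t)^β :=
          mul_nonneg (Real.rpow_nonneg hv0 _) (Real.rpow_nonneg hv0 _)
        have e3 : (V t)^(1-α)/a * (-(a * (V t)^α + b * (V t)^β))
            = -((V t)^(1-α) * (V t)^α) - (b/a) * ((V t)^(1-α) * (V t)^β) := by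
          field_simp; ring
        rw [e3, e1] at step
        have e4 : 0 ≤ (b/a) * ((V t)^(1-α) * (V t)^β) :=
          mul_nonneg (div_nonneg hb.le ha.le) e2
        linarith
    · push_neg at h1
      simp only [hDdef, if_neg (not_le.mpr h1)]
      have h0 : 0 < V t := lt_trans one_pos h1
      have hc : 0 < (V t)^(1-β)/b := div_pos (Real.rpow_pos_of_pos h0 _) hb
      have step := mul_le_mul_of_nonneg_left hw hc.le
      have e1 : (V t)^(1-β) * (V t)^β = V t := by
        rw [← Real.rpow_add h0, show (1:ℝ)-β+β = 1 by ring, Real.rpow_one]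
      have e2 : 0 ≤ (V t)^(1-β) * (V t)^α :=
        mul_nonneg (Real.rpow_nonneg hv0 _) (Real.rpow_nonneg hv0 _)
      have e3 : (V t)^(1-β)/b * (-(a * (V t)^α + b * (V t)^β))
          = -((V t)^(1-β) * (V t)^β) - (a/b) * ((V t)^(1-β) * (V t)^α) := by
        field_simp; ring
      rw [e3, e1] at step
      have e4 : 0 ≤ (a/b) * ((V t)^(1-β) * (V t)^α) :=
        mul_nonneg (div_nonneg ha.le hb.le) e2
      linarith
  have hgcont : ContinuousOn (fun s => H (V s)) (Icc 0 T) := by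
    intro t ht
    have ht0 : (0:ℝ) ≤ t := ht.1
    have hVc : ContinuousAt V t := (hVd t ht0).continuousAt
    have hLc : ContinuousAt (fun s => L (V s)) t := by
      have h := Real.continuousAt_rpow_const (V t) (2-α) (Or.inr h2α.le)
      exact (h.comp hVc).div_const _
    rcases lt_trichotomy (V t) 1 with hlt | heq | hgt
    · have hev : ∀ᶠ s in nhds t, V s < 1 := hVc.eventually (eventually_lt_nhds hlt)
      refine (hLc.congr ?_).continuousWithinAt
      filter_upwards [hev] with s hs
      simp only [hHdef]; rw [if_pos (le_of_lt hs)]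
    · have hne : V t ≠ 0 := by rw [heq]; norm_num
      have hRc : ContinuousAt (fun s => R (V s)) t := by
        have h := Real.continuousAt_rpow_const (V t) (2-β) (Or.inl hne)
        exact (((h.comp hVc).const_sub 1).div_const _).const_add _
      have hbound : ∀ s, min (L (V s)) (R (V s)) ≤ H (V s) ∧ H (V s) ≤ max (L (V s)) (R (V s)) := by
        intro s
        by_cases h : V s ≤ 1
        · simp only [hHdef]; rw [if_pos h]; exact ⟨min_le_left _ _, le_max_left _ _⟩
        · simp only [hHdef]; rw [if_neg h]; exact ⟨min_le_right _ _, le_max_right _ _⟩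
      have hLR : L (V t) = R (V t) := by
        simp only [hLdef, hRdef, heq, Real.one_rpow]
        field_simp
        ring
      have hHt : H (V t) = L (V t) := by
        simp only [hHdef]; rw [if_pos (le_of_eq heq)]
      have hmin : Filter.Tendsto (fun s => min (L (V s)) (R (V s))) (nhds t) (nhds (H (V t))) := by
        have h : Filter.Tendsto (fun s => min (L (V s)) (R (V s))) (nhds t)
            (nhds (min (L (V t)) (R (V t)))) := hLc.min hRc
        rwa [min_eq_left (le_of_eq hLR), ← hHt] at h
      have hmax : Filter.Tendsto (fun s => max (L (V s)) (R (V s))) (nhds t) (nhds (H (V t))) := by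
        have h : Filter.Tendsto (fun s => max (L (V s)) (R (V s))) (nhds t)
            (nhds (max (L (V t)) (R (V t)))) := hLc.max hRc
        rwa [max_eq_left (ge_of_eq hLR), ← hHt] at h
      have hca : ContinuousAt (fun s => H (V s)) t :=
        tendsto_of_tendsto_of_tendsto_of_le_of_le hmin hmax
          (fun s => (hbound s).1) (fun s => (hbound s).2)
      exact hca.continuousWithinAt
    · have hne : V t ≠ 0 := by intro h; rw [h] at hgt; linarith
      have hRc : ContinuousAt (fun s => R (V s)) t := by
        have h := Real.continuousAt_rpow_const (V t) (2-β) (Or.inl hne)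
        exact (((h.comp hVc).const_sub 1).div_const _).const_add _
      have hev : ∀ᶠ s in nhds t, 1 < V s := hVc.eventually (eventually_gt_nhds hgt)
      refine (hRc.congr ?_).continuousWithinAt
      filter_upwards [hev] with s hs
      simp only [hHdef]; rw [if_neg (not_le.mpr hs)]
  have φint : IntegrableOn (fun t => -(V t)) (Icc 0 T) := by
    exact ((hVcont.mono (Icc_subset_Ici_self)).neg).integrableOn_Icc
  have key := intervalIntegral.sub_le_integral_of_hasDeriv_right_of_le hT hgcont hgderiv φint hDle
  rw [intervalIntegral.integral_neg] at key
  -- bounds on H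
  have hHub : ∀ v, 0 ≤ v → H v ≤ 1/(a*(2-α)) + 1/(b*(β-2)) := by
    intro v hv
    by_cases h : v ≤ 1
    · show (if v ≤ 1 then L v else R v) ≤ _
      rw [if_pos h]
      show v ^ (2-α) / (a*(2-α)) ≤ _
      have h1 : v ^ (2-α) ≤ 1 := Real.rpow_le_one hv h h2α.le
      have h2 : v ^ (2-α) / (a*(2-α)) ≤ 1 / (a*(2-α)) := by gcongr
      have h3 : 0 < 1/(b*(β-2)) := by positivity
      linarith
    · push_neg at h
      show (if v ≤ 1 then L v else R v) ≤ _
      rw [if_neg (not_le.mpr h)]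
      show 1/(a*(2-α)) + (1 - v ^ (2-β)) / (b*(β-2)) ≤ _
      have h1 : 0 ≤ v ^ (2-β) := Real.rpow_nonneg hv _
      have h2 : (1 - v ^ (2-β)) / (b*(β-2)) ≤ 1 / (b*(β-2)) := by
        gcongr
        linarith
      linarith
  have hHlb : ∀ v, 0 ≤ v → 0 ≤ H v := by
    intro v hv
    by_cases h : v ≤ 1
    · show 0 ≤ (if v ≤ 1 then L v else R v)
      rw [if_pos h]
      show 0 ≤ v ^ (2-α) / (a*(2-α))
      positivity
    · push_neg at h
      show 0 ≤ (if v ≤ 1 then L v else R v)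
      rw [if_neg (not_le.mpr h)]
      show 0 ≤ 1/(a*(2-α)) + (1 - v ^ (2-β)) / (b*(β-2))
      have h1 : v ^ (2-β) ≤ 1 := Real.rpow_le_one_of_one_le_of_nonpos h.le (by linarith)
      have h2 : 0 ≤ (1 - v ^ (2-β)) / (b*(β-2)) := div_nonneg (by linarith) (by positivity)
      have h3 : 0 < 1/(a*(2-α)) := by positivity
      linarith
  have h1 := hHub (V 0) (hV0 0)
  have h2 := hHlb (V T) (hV0 T)
  linarith

/-- Theorem 6 (regret bound for the fixed-time flow g_{p,q} with β > 2, i.e.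
q > 3): the static regret is bounded by a constant independent of the initial
state. -/
theorem regret_bound_gpq_flow
    {n : ℕ} (f : EuclideanSpace ℝ (Fin n) → ℝ) (fstar μ p q : ℝ)
    (hf : ContDiff ℝ 1 f)
    (hmin : ∃ z, f z = fstar) (hlb : ∀ z, fstar ≤ f z)
    (hμ : 0 < μ)
    (hPL : ∀ z, μ * (f z - fstar) ≤ (1/2) * ‖gradient f z‖ ^ 2)
    (hp : p ∈ Set.Ico (0:ℝ) 1) (hq : 3 < q)
    (x : ℝ → EuclideanSpace ℝ (Fin n))
    (hx : ∀ t ≥ (0:ℝ), HasDerivAt x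
      (-((‖gradient f (x t)‖ ^ (p - 1) + ‖gradient f (x t)‖ ^ (q - 1)) •
        gradient f (x t))) t) :
    ∀ T ≥ (0:ℝ),
      ∫ t in (0:ℝ)..T, (f (x t) - fstar) ≤
        1 / ((2 * μ) ^ ((p + 1)/2) * (2 - (p + 1)/2)) +
          1 / ((2 * μ) ^ ((q + 1)/2) * ((q + 1)/2 - 2)) := by
  obtain ⟨hp0, hp1⟩ := hp
  have hdiff : Differentiable ℝ f := hf.differentiable one_ne_zero
  set V : ℝ → ℝ := fun t => f (x t) - fstar with hVdef
  set W : ℝ → ℝ := fun t =>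
    -((‖gradient f (x t)‖ ^ (p-1) + ‖gradient f (x t)‖ ^ (q-1)) * ‖gradient f (x t)‖^2)
    with hWdef
  have hμ2 : (0:ℝ) < 2 * μ := by linarith
  have hVd : ∀ t ≥ (0:ℝ), HasDerivAt V (W t) t := by
    intro t ht
    have hg : HasGradientAt f (gradient f (x t)) (x t) := (hdiff (x t)).hasGradientAt
    have comp := hg.hasFDerivAt.comp_hasDerivAt t (hx t ht)
    have heval : (InnerProductSpace.toDual ℝ _ (gradient f (x t)))
        (-((‖gradient f (x t)‖ ^ (p-1) + ‖gradient f (x t)‖ ^ (q-1)) •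
          gradient f (x t))) = W t := by
      rw [InnerProductSpace.toDual_apply_apply, inner_neg_right, real_inner_smul_right,
        real_inner_self_eq_norm_sq]
    rw [heval] at comp
    exact comp.sub_const fstar
  have hV0 : ∀ t, 0 ≤ V t := fun t => sub_nonneg.mpr (hlb (x t))
  have hWle : ∀ t ≥ (0:ℝ), W t ≤
      -((2*μ) ^ ((p+1)/2) * V t ^ ((p+1)/2) + (2*μ) ^ ((q+1)/2) * V t ^ ((q+1)/2)) := by
    intro t ht
    set r : ℝ := ‖gradient f (x t)‖ with hrdef
    have hr0 : (0:ℝ) ≤ r := norm_nonneg _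
    have hv0 : 0 ≤ V t := hV0 t
    have hPLt : 2*μ*(V t) ≤ r^2 := by
      have h := hPL (x t)
      simp only [hVdef]
      nlinarith [h]
    have main : ∀ e : ℝ, -1 < e → (2*μ)^((e+1)/2) * V t ^ ((e+1)/2) ≤ r ^ (e-1) * r^2 := by
      intro e he
      have he2 : (0:ℝ) < (e+1)/2 := by linarith
      have hchain : (2*μ)^((e+1)/2) * V t ^ ((e+1)/2) ≤ (r^2) ^ ((e+1)/2) := by
        rw [← Real.mul_rpow hμ2.le hv0]
        exact Real.rpow_le_rpow (by positivity) hPLt he2.le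
      have heq : (r^2 : ℝ) ^ ((e+1)/2) = r ^ (e-1) * r^2 := by
        rcases eq_or_lt_of_le hr0 with h0 | h0
        · rw [← h0]
          rw [show ((0:ℝ)^2 : ℝ) = 0 by norm_num, Real.zero_rpow (ne_of_gt he2)]
          norm_num
        · have h2r : (r^2 : ℝ) = r ^ (2:ℝ) := by
            rw [← Real.rpow_natCast r 2]; norm_num
          rw [h2r, ← Real.rpow_mul hr0, ← Real.rpow_add h0]
          rw [show (2:ℝ) * ((e+1)/2) = e + 1 by ring, show e - 1 + (2:ℝ) = e + 1 by ring]
      rw [← heq]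
      exact hchain
    have hmp := main p (by linarith)
    have hmq := main q (by linarith)
    simp only [hWdef]
    nlinarith [hmp, hmq]
  intro T hT
  exact regret_aux ((2*μ) ^ ((p+1)/2)) ((2*μ) ^ ((q+1)/2)) ((p+1)/2) ((q+1)/2) V W
    (Real.rpow_pos_of_pos hμ2 _) (Real.rpow_pos_of_pos hμ2 _)
    (by linarith) (by linarith) (by linarith)
    hV0 hVd hWle T hT
end

section
/- Let G be a connected simple graph on the vertex set {1,…,N} with Laplacian matrix L ∈ ℝ^{N×N}, and let λ > 0 be such that ‖Lz‖₂² ≥ λ·zᵀLz for all z ∈ ℝ^N (any λ not exceeding the algebraic connectivity λ₂(L) has this property). Let σ, ρ > 0, p ∈ [0,1), q > 1, and let g : ℝ^N → ℝ^N satisfy ⟨g(y), y⟩ ≥ σ‖y‖₂^{1+p} + ρ‖y‖₂^{1+q} for all y ∈ ℝ^N. If x : [0,∞) → ℝ^N is differentiable and x′(t) = −g(L·x(t)) for all t ≥ 0, then the network reaches consensus in fixed time: for all t ≥ T = 1/(λσ(1−p)) + 1/(λρ(q−1)) and all vertices i, j, x_i(t) = x_j(t). (Corollary 1.) -/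
open scoped RealInnerProductSpace

/-- Mean value inequality: lower bound. -/
lemma mvt_ge (f f' : ℝ → ℝ) (a b m : ℝ) (hab : a ≤ b)
    (hf : ∀ u ∈ Set.Icc a b, HasDerivAt f (f' u) u)
    (hm : ∀ u ∈ Set.Icc a b, m ≤ f' u) :
    f a + m * (b - a) ≤ f b := by
  have hd : ∀ u ∈ Set.Icc a b, HasDerivAt (fun u => f u - m * u) (f' u - m) u := by
    intro u hu
    have h := (hf u hu).sub ((hasDerivAt_id' (𝕜 := ℝ) u).const_mul m)
    rw [mul_one] at h
    exact h
  have h : MonotoneOn (fun u => f u - m * u) (Set.Icc a b) := by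
    apply monotoneOn_of_deriv_nonneg (convex_Icc a b)
    · exact fun u hu => (hd u hu).continuousAt.continuousWithinAt
    · intro u hu
      exact (hd u (interior_subset hu)).differentiableAt.differentiableWithinAt
    · intro u hu
      rw [(hd u (interior_subset hu)).deriv]
      linarith [hm u (interior_subset hu)]
  have := h (Set.left_mem_Icc.mpr hab) (Set.right_mem_Icc.mpr hab) hab
  simp only at this
  nlinarith

lemma mvt_le (f f' : ℝ → ℝ) (a b m : ℝ) (hab : a ≤ b)
    (hf : ∀ u ∈ Set.Icc a b, HasDerivAt f (f' u) u)
    (hm : ∀ u ∈ Set.Icc a b, f' u ≤ m) :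
    f b ≤ f a + m * (b - a) := by
  have := mvt_ge (fun u => -f u) (fun u => -f' u) a b (-m) hab
    (fun u hu => (hf u hu).neg) (fun u hu => by linarith [hm u hu])
  linarith

set_option maxHeartbeats 1000000 in
/-- Corollary 1: fixed-time consensus of the network flow x' = -g(Lx) over a
connected graph, where L is the graph Laplacian. -/
theorem fxt_network_consensus
    (N : ℕ) (hN : 1 ≤ N) (G : SimpleGraph (Fin N)) [DecidableRel G.Adj]
    (hG : G.Connected)
    (lam : ℝ) (hlam : 0 < lam)
    (hPL : ∀ z : EuclideanSpace ℝ (Fin N),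
      lam * ⟪z, Matrix.toEuclideanLin (G.lapMatrix ℝ) z⟫ ≤
        ‖Matrix.toEuclideanLin (G.lapMatrix ℝ) z‖ ^ 2)
    (σ ρ p q : ℝ) (hσ : 0 < σ) (hρ : 0 < ρ) (hp : p ∈ Set.Ico (0:ℝ) 1) (hq : 1 < q)
    (g : EuclideanSpace ℝ (Fin N) → EuclideanSpace ℝ (Fin N))
    (hg : ∀ y, σ * ‖y‖ ^ (1 + p) + ρ * ‖y‖ ^ (1 + q) ≤ ⟪g y, y⟫)
    (x : ℝ → EuclideanSpace ℝ (Fin N))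
    (hx : ∀ t ≥ (0:ℝ),
      HasDerivAt x (-(g (Matrix.toEuclideanLin (G.lapMatrix ℝ) (x t)))) t) :
    ∀ t : ℝ, 1 / (lam * σ * (1 - p)) + 1 / (lam * ρ * (q - 1)) ≤ t →
      ∀ i j : Fin N, x t i = x t j := by
  obtain ⟨hp0, hp1⟩ := hp
  set A : EuclideanSpace ℝ (Fin N) →ₗ[ℝ] EuclideanSpace ℝ (Fin N) :=
    Matrix.toEuclideanLin (G.lapMatrix ℝ) with hA
  have hsymm : ∀ v w : EuclideanSpace ℝ (Fin N), ⟪A v, w⟫ = ⟪v, A w⟫ :=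
    fun v w => (Matrix.isHermitian_iff_isSymmetric.mp (SimpleGraph.posSemidef_lapMatrix ℝ G).1) v w
  have hbil : ∀ z : EuclideanSpace ℝ (Fin N),
      ⟪z, A z⟫ = Matrix.toLinearMap₂' ℝ (G.lapMatrix ℝ) z z := by
    intro z
    rw [Matrix.toLinearMap₂'_apply']
    simp [hA, Matrix.toEuclideanLin, inner, dotProduct, Matrix.mulVec, mul_comm]
  have hnn : ∀ z : EuclideanSpace ℝ (Fin N), 0 ≤ ⟪z, A z⟫ := by
    intro z
    have := (SimpleGraph.posSemidef_lapMatrix ℝ G).dotProduct_mulVec_nonneg z.ofLp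
    rw [hbil, Matrix.toLinearMap₂'_apply']
    simpa using this
  set U : ℝ → ℝ := fun t => lam * ⟪x t, A (x t)⟫ with hUdef
  set D : ℝ → ℝ := fun t => -(2 * lam) * ⟪g (A (x t)), A (x t)⟫ with hDdef
  have hU : ∀ t ∈ Set.Ici (0:ℝ), HasDerivAt U (D t) t := by
    intro t ht
    have h1 := hx t ht
    have h2 : HasDerivAt (fun u => A (x u)) (A (-(g (A (x t))))) t := by
      have h2' := ((LinearMap.toContinuousLinearMap A).hasFDerivAt.comp_hasDerivAt t h1)
      simpa [Function.comp_def] using h2'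
    have h3 := (h1.inner ℝ h2).const_mul lam
    have e1 : ⟪x t, A (-(g (A (x t))))⟫ = -⟪g (A (x t)), A (x t)⟫ := by
      rw [map_neg, inner_neg_right, ← hsymm, real_inner_comm]
    have e2 : ⟪-(g (A (x t))), A (x t)⟫ = -⟪g (A (x t)), A (x t)⟫ :=
      inner_neg_left _ _
    have h4 : D t = lam * (⟪x t, A (-(g (A (x t))))⟫ + ⟪-(g (A (x t))), A (x t)⟫) := by
      rw [e1, e2, hDdef]; ring
    rw [h4]
    exact h3
  have hUnn : ∀ t, 0 ≤ U t := fun t => mul_nonneg hlam.le (hnn _)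
  -- key differential inequality
  have hDle : ∀ t, D t ≤ -(2 * lam) * (σ * (U t) ^ ((1+p)/2) + ρ * (U t) ^ ((1+q)/2)) := by
    intro t
    have hy := hg (A (x t))
    have hU2 : U t ≤ ‖A (x t)‖ ^ 2 := hPL (x t)
    set y := ‖A (x t)‖ with hy'
    have hy0 : 0 ≤ y := norm_nonneg _
    have key : ∀ r : ℝ, 0 ≤ r → (U t) ^ ((1+r)/2) ≤ y ^ (1 + r) := by
      intro r hr
      calc (U t) ^ ((1+r)/2) ≤ (y ^ 2) ^ ((1+r)/2) :=
            Real.rpow_le_rpow (hUnn t) hU2 (by positivity)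
        _ = y ^ (1 + r) := by
          rw [← Real.rpow_natCast y 2, ← Real.rpow_mul hy0]
          norm_num
          congr 1
          ring
    have k1 := key p hp0
    have k2 := key q (by linarith)
    simp only [hDdef]
    nlinarith [mul_le_mul_of_nonneg_left k1 hσ.le, mul_le_mul_of_nonneg_left k2 hρ.le, hlam]
  have hD0 : ∀ t, D t ≤ 0 := by
    intro t
    refine (hDle t).trans ?_
    have h1 : (0:ℝ) ≤ σ * (U t) ^ ((1+p)/2) + ρ * (U t) ^ ((1+q)/2) := by
      have := Real.rpow_nonneg (hUnn t) ((1+p)/2)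
      have := Real.rpow_nonneg (hUnn t) ((1+q)/2)
      positivity
    nlinarith
  -- U antitone on [0, ∞)
  have hanti : AntitoneOn U (Set.Ici (0:ℝ)) := by
    apply antitoneOn_of_deriv_nonpos (convex_Ici 0)
    · exact fun u hu => (hU u hu).continuousAt.continuousWithinAt
    · intro u hu
      exact (hU u (interior_subset hu)).differentiableAt.differentiableWithinAt
    · intro u hu
      rw [(hU u (interior_subset hu)).deriv]
      exact hD0 u
  -- the main argument
  intro t ht i j
  set c1 : ℝ := 1 / (lam * σ * (1 - p)) with hc1
  set t1 : ℝ := 1 / (lam * ρ * (q - 1)) with ht1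
  have hK1 : 0 < lam * σ * (1 - p) := by
    apply mul_pos (mul_pos hlam hσ); linarith
  have hK2 : 0 < lam * ρ * (q - 1) := by
    apply mul_pos (mul_pos hlam hρ); linarith
  have hc1pos : 0 < c1 := by rw [hc1]; exact one_div_pos.mpr hK1
  have ht1pos : 0 < t1 := by rw [ht1]; exact one_div_pos.mpr hK2
  have htpos : 0 < t := lt_of_lt_of_le (by linarith) ht
  -- suffices U t = 0
  suffices hU0 : U t = 0 by
    have hip : ⟪x t, A (x t)⟫ = 0 := by
      simp only [hUdef] at hU0
      rcases mul_eq_zero.mp hU0 with h | h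
      · exact absurd h (ne_of_gt hlam)
      · exact h
    rw [hbil] at hip
    exact (SimpleGraph.lapMatrix_toLinearMap₂'_apply'_eq_zero_iff_forall_reachable G (x t)).mp hip
      i j (hG.preconnected i j)
  by_contra hU0
  have hUtpos : 0 < U t := lt_of_le_of_ne (hUnn t) (Ne.symm hU0)
  have hpos : ∀ s ∈ Set.Icc (0:ℝ) t, 0 < U s := by
    intro s hs
    exact lt_of_lt_of_le hUtpos (hanti hs.1 (le_trans hs.1 hs.2 : (0:ℝ) ≤ t) hs.2)
  have ht1t : t1 ≤ t := by linarith
  -- Phase 2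
  have claimA : U t1 ≤ 1 := by
    set r : ℝ := (q - 1) / 2 with hr
    have hrpos : 0 < r := by rw [hr]; linarith
    set φ : ℝ → ℝ := fun s => (U s) ^ (-r) with hφ
    have hφd : ∀ s ∈ Set.Icc (0:ℝ) t1, HasDerivAt φ (-r * (U s) ^ (-r - 1) * D s) s := by
      intro s hs
      have hUs : U s ≠ 0 := (hpos s ⟨hs.1, hs.2.trans ht1t⟩).ne'
      exact (Real.hasDerivAt_rpow_const (Or.inl hUs)).comp s (hU s hs.1)
    have hφm : ∀ s ∈ Set.Icc (0:ℝ) t1, lam * ρ * (q - 1) ≤ -r * (U s) ^ (-r - 1) * D s := by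
      intro s hs
      have hUs : 0 < U s := hpos s ⟨hs.1, hs.2.trans ht1t⟩
      have hpow : (0:ℝ) < (U s) ^ (-r - 1) := Real.rpow_pos_of_pos hUs _
      have h2 : 2 * lam * ρ * (U s) ^ ((1+q)/2) ≤ -D s := by
        have h3 : (0:ℝ) ≤ σ * (U s) ^ ((1+p)/2) :=
          mul_nonneg hσ.le (Real.rpow_nonneg (hUnn s) _)
        nlinarith [hDle s, mul_nonneg (by linarith : (0:ℝ) ≤ 2*lam) h3]
      have h5 : r * (U s) ^ (-r-1) * (2 * lam * ρ * (U s) ^ ((1+q)/2))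
          ≤ r * (U s) ^ (-r-1) * (-D s) :=
        mul_le_mul_of_nonneg_left h2 (by positivity)
      have h6 : (U s) ^ (-r-1) * (U s) ^ ((1+q)/2) = 1 := by
        rw [← Real.rpow_add hUs]
        have he : -r - 1 + (1+q)/2 = 0 := by rw [hr]; ring
        rw [he, Real.rpow_zero]
      have h7 : r * (U s) ^ (-r-1) * (2 * lam * ρ * (U s) ^ ((1+q)/2)) = lam * ρ * (q-1) := by
        calc r * (U s) ^ (-r-1) * (2 * lam * ρ * (U s) ^ ((1+q)/2))
            = (2 * lam * ρ * r) * ((U s) ^ (-r-1) * (U s) ^ ((1+q)/2)) := by ring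
          _ = lam * ρ * (q-1) := by rw [h6, hr]; ring
      nlinarith [h5, h7]
    have hm := mvt_ge φ (fun s => -r * (U s) ^ (-r - 1) * D s) 0 t1 (lam * ρ * (q-1))
      ht1pos.le hφd hφm
    have hφ0 : 0 < φ 0 := Real.rpow_pos_of_pos (hpos 0 ⟨le_refl _, htpos.le⟩) _
    have hmt : lam * ρ * (q-1) * (t1 - 0) = 1 := by
      rw [sub_zero, ht1]
      field_simp
      exact div_self (ne_of_gt (by linarith))
    rw [hmt] at hm
    by_contra hcon
    push_neg at hcon
    have : φ t1 < 1 := by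
      have := Real.rpow_lt_one_of_one_lt_of_neg hcon (by linarith : -r < 0)
      simpa [hφ] using this
    linarith
  -- Phase 1
  set s2 : ℝ := (1 - p) / 2 with hs2
  have hs2pos : 0 < s2 := by rw [hs2]; linarith
  set ψ : ℝ → ℝ := fun u => (U u) ^ s2 with hψ
  have hψd : ∀ u ∈ Set.Icc t1 t, HasDerivAt ψ (s2 * (U u) ^ (s2 - 1) * D u) u := by
    intro u hu
    have hUu : U u ≠ 0 := (hpos u ⟨ht1pos.le.trans hu.1, hu.2⟩).ne'
    exact (Real.hasDerivAt_rpow_const (Or.inl hUu)).comp u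
      (hU u (Set.mem_Ici.mpr (ht1pos.le.trans hu.1)))
  have hψm : ∀ u ∈ Set.Icc t1 t, s2 * (U u) ^ (s2 - 1) * D u ≤ -(lam * σ * (1 - p)) := by
    intro u hu
    have hUu : 0 < U u := hpos u ⟨ht1pos.le.trans hu.1, hu.2⟩
    have hpow : (0:ℝ) < (U u) ^ (s2 - 1) := Real.rpow_pos_of_pos hUu _
    have h2 : D u ≤ -(2 * lam * σ) * (U u) ^ ((1+p)/2) := by
      have h3 : (0:ℝ) ≤ ρ * (U u) ^ ((1+q)/2) :=
        mul_nonneg hρ.le (Real.rpow_nonneg (hUnn u) _)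
      nlinarith [hDle u, mul_nonneg (by linarith : (0:ℝ) ≤ 2*lam) h3]
    have h5 : s2 * (U u) ^ (s2-1) * D u ≤ s2 * (U u) ^ (s2-1) * (-(2 * lam * σ) * (U u) ^ ((1+p)/2)) :=
      mul_le_mul_of_nonneg_left h2 (by positivity)
    refine h5.trans_eq ?_
    have h6 : (U u) ^ (s2-1) * (U u) ^ ((1+p)/2) = 1 := by
      rw [← Real.rpow_add hUu]
      have he : s2 - 1 + (1+p)/2 = 0 := by rw [hs2]; ring
      rw [he, Real.rpow_zero]
    calc s2 * (U u) ^ (s2-1) * (-(2 * lam * σ) * (U u) ^ ((1+p)/2))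
        = (s2 * (-(2 * lam * σ))) * ((U u) ^ (s2-1) * (U u) ^ ((1+p)/2)) := by ring
      _ = -(lam * σ * (1 - p)) := by rw [h6, hs2]; ring
  have hm := mvt_le ψ (fun u => s2 * (U u) ^ (s2 - 1) * D u) t1 t (-(lam * σ * (1-p)))
    ht1t hψd hψm
  have hψt1 : ψ t1 ≤ 1 := by
    have := Real.rpow_le_one (hUnn t1) claimA hs2pos.le
    simpa [hψ] using this
  have hψt : 0 < ψ t := Real.rpow_pos_of_pos hUtpos _
  have hfinal : 1 ≤ lam * σ * (1-p) * (t - t1) := by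
    have h8 : c1 ≤ t - t1 := by linarith
    have h9 : lam * σ * (1-p) * c1 = 1 := by
      rw [hc1]; field_simp
    calc (1:ℝ) = lam * σ * (1-p) * c1 := h9.symm
      _ ≤ lam * σ * (1-p) * (t - t1) := mul_le_mul_of_nonneg_left h8 hK1.le
  have hneg : -(lam * σ * (1-p)) * (t - t1) ≤ -1 := by nlinarith
  linarith
end
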